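/- (Geometric quasilinearization representation.) A state U = (ρ, m, E) belongs to 𝒢 if and only if ρ > 0 and φ(U; z, u*) > 0 for every u* ∈ ℝ² and every z ∈ ℝ² with z ≠ 0. -/

import Mathlib

open Matrix

noncomputable section

/-- A state is a triple `(ρ, m, E)` with `ρ : ℝ`, `m : ℝ²`, `E` a 2×2 real matrix. -/
abbrev Mat2 := Matrix (Fin 2) (Fin 2) ℝ

/-- The pressure tensor `p(U) = 2E - (1/ρ) m mᵀ`. -/
def pTensor (ρ : ℝ) (m : Fin 2 → ℝ) (E : Mat2) : Mat2 :=
  (2 : ℝ) • E - ρ⁻¹ • vecMulVec m m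

/-- `φ(U; z, u*) = zᵀEz − (m·z)(u*·z) + (ρ/2)(u*·z)²`. -/
def phi (ρ : ℝ) (m : Fin 2 → ℝ) (E : Mat2) (z u : Fin 2 → ℝ) : ℝ :=
  z ⬝ᵥ (E *ᵥ z) - (m ⬝ᵥ z) * (u ⬝ᵥ z) + (ρ / 2) * (u ⬝ᵥ z) ^ 2

/-- The admissible set `𝒢`: states with positive density and positive definite pressure tensor. -/
def G : Set (ℝ × (Fin 2 → ℝ) × Mat2) :=
  {U | 0 < U.1 ∧ (pTensor U.1 U.2.1 U.2.2).PosDef}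

/-- The closed admissible set `𝒢̄`: states (so `E` symmetric) with `ρ ≥ 0` and
`φ(U; z, u*) ≥ 0` for all `z, u*`. -/
def Gbar : Set (ℝ × (Fin 2 → ℝ) × Mat2) :=
  {U | 0 ≤ U.1 ∧ U.2.2.IsSymm ∧ ∀ z u : Fin 2 → ℝ, 0 ≤ phi U.1 U.2.1 U.2.2 z u}


lemma phi_eq (ρ : ℝ) (hρ : ρ ≠ 0) (m : Fin 2 → ℝ) (E : Mat2) (z u : Fin 2 → ℝ) :
    phi ρ m E z u
    = (1/2) * (z ⬝ᵥ (pTensor ρ m E *ᵥ z)) + (ρ/2) * (u ⬝ᵥ z - (m ⬝ᵥ z)/ρ)^2 := by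
  simp only [phi, pTensor]
  simp [vecMulVec_apply, mulVec, dotProduct, Fin.sum_univ_two, Matrix.sub_apply, Matrix.smul_apply]
  field_simp
  ring

/-- Geometric quasilinearization (GQL) representation of the admissible set `𝒢`. -/
theorem gql_representation (ρ : ℝ) (m : Fin 2 → ℝ) (E : Mat2) (hE : E.IsSymm) :
    (ρ, m, E) ∈ G ↔
      (0 < ρ ∧ ∀ u : Fin 2 → ℝ, ∀ z : Fin 2 → ℝ, z ≠ 0 → 0 < phi ρ m E z u) := by
  constructor
  · rintro ⟨hρ, hp⟩
    refine ⟨hρ, fun u z hz => ?_⟩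
    rw [phi_eq ρ hρ.ne' m E z u]
    have h1 : 0 < z ⬝ᵥ (pTensor ρ m E *ᵥ z) := by simpa using hp.dotProduct_mulVec_pos hz
    have h2 : 0 ≤ (ρ/2) * (u ⬝ᵥ z - (m ⬝ᵥ z)/ρ)^2 := by positivity
    linarith
  · rintro ⟨hρ, hφ⟩
    refine ⟨hρ, Matrix.PosDef.of_dotProduct_mulVec_pos ?_ fun z hz => ?_⟩
    · show (pTensor ρ m E)ᴴ = pTensor ρ m E
      have hEs : Eᵀ = E := hE
      ext i j
      have hEa : E j i = E i j := by simpa [transpose_apply] using congrFun (congrFun hEs i) j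
      simp [pTensor, conjTranspose_apply, Matrix.sub_apply, Matrix.smul_apply, vecMulVec_apply,
        hEa, mul_comm]
    · have hzz : 0 < z ⬝ᵥ z := by
        have h : z ⬝ᵥ z ≠ 0 := by
          intro h0
          exact hz ((dotProduct_self_eq_zero).mp h0)
        have hnn : 0 ≤ z ⬝ᵥ z := by
          simp only [dotProduct, Fin.sum_univ_two]
          nlinarith [sq_nonneg (z 0), sq_nonneg (z 1)]
        exact lt_of_le_of_ne hnn (Ne.symm h)
      set u : Fin 2 → ℝ := ((m ⬝ᵥ z)/(ρ * (z ⬝ᵥ z))) • z with hu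
      have huz : u ⬝ᵥ z = (m ⬝ᵥ z)/ρ := by
        have key : ∀ a b r : ℝ, a ≠ 0 → r ≠ 0 → (b/(r*a))*a = b/r := by
          intro a b r ha hr; field_simp
        rw [hu, smul_dotProduct]
        exact key _ _ _ hzz.ne' hρ.ne'
      have := hφ u z hz
      rw [phi_eq ρ hρ.ne' m E z u, huz] at this
      simp at this
      simpa using this
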